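/- For every integer n ≥ 2, all inner derivations of the Lie algebra u_n are locally nilpotent: for every u ∈ u_n and every v ∈ u_n there exists a natural number m such that (ad u)^m(v) = 0, where ad(u)(v) = [u,v]. -/

import Mathlib

open MvPolynomial

noncomputable section


/-- If a derivation of `MvPolynomial σ K` maps every generator `X j`, `j ∈ s`, into the
subalgebra `supported K s` of polynomials supported on `s`, then it maps the whole of
`supported K s` into itself. -/
theorem Derivation.mem_supported_of_forall_mem
    {K : Type*} [CommRing K] {σ : Type*} (s : Set σ)
    (D : Derivation K (MvPolynomial σ K) (MvPolynomial σ K))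
    (h : ∀ j ∈ s, D (X j) ∈ supported K s)
    {p : MvPolynomial σ K} (hp : p ∈ supported K s) : D p ∈ supported K s := by
  rw [supported_eq_adjoin_X] at hp
  induction hp using Algebra.adjoin_induction with
  | mem x hx =>
    obtain ⟨j, hj, rfl⟩ := hx
    exact h j hj
  | algebraMap r =>
    rw [Derivation.map_algebraMap]
    exact zero_mem _
  | add x y hx hy ihx ihy =>
    rw [map_add]
    exact add_mem ihx ihy
  | mul x y hx hy ihx ihy =>
    rw [Derivation.leibniz, smul_eq_mul, smul_eq_mul]
    rw [← supported_eq_adjoin_X] at hx hy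
    exact add_mem (mul_mem hx ihy) (mul_mem hy ihx)

/-- If a derivation of `MvPolynomial σ K` kills every generator `X j`, `j ∈ s`, then it
kills the whole subalgebra `supported K s`. -/
theorem Derivation.eq_zero_of_forall_eq_zero
    {K : Type*} [CommRing K] {σ : Type*} (s : Set σ)
    (D : Derivation K (MvPolynomial σ K) (MvPolynomial σ K))
    (h : ∀ j ∈ s, D (X j) = 0)
    {p : MvPolynomial σ K} (hp : p ∈ supported K s) : D p = 0 := by
  rw [supported_eq_adjoin_X] at hp
  induction hp using Algebra.adjoin_induction with
  | mem x hx =>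
    obtain ⟨j, hj, rfl⟩ := hx
    exact h j hj
  | algebraMap r =>
    rw [Derivation.map_algebraMap]
  | add x y hx hy ihx ihy =>
    rw [map_add, ihx, ihy, add_zero]
  | mul x y hx hy ihx ihy =>
    rw [Derivation.leibniz, ihx, ihy, smul_zero, smul_zero, add_zero]

/-- The defining condition for the Lie algebra `u_n = K∂₁ ⊕ P₁∂₂ ⊕ ⋯ ⊕ P_{n-1}∂ₙ` of
triangular polynomial derivations of `P_n = K[x₁,…,xₙ]` (variables indexed by `Fin n`,
zero-based): a derivation `D` of `P_n` is triangular iff, for every `i`, the polynomial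
`D (X i)` only involves the variables `X j` with `j < i` (so the coefficient of `∂_i`
lies in `P_{i-1}`, where `P₀ = K`). -/
def triSet (K : Type*) [Field K] (n : ℕ) :
    Set (Derivation K (MvPolynomial (Fin n) K) (MvPolynomial (Fin n) K)) :=
  {D | ∀ i : Fin n, D (X i) ∈ supported K {j : Fin n | (j : ℕ) < (i : ℕ)}}

theorem supported_upward {K : Type*} [Field K] {n : ℕ}
    (p : MvPolynomial (Fin n) K) (s t : Set (Fin n)) (hst : s ⊆ t)
    (hp : p ∈ supported K s) : p ∈ supported K t :=
  supported_mono hst hp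

theorem triSet_stable {K : Type*} [Field K] {n : ℕ}
    {D : Derivation K (MvPolynomial (Fin n) K) (MvPolynomial (Fin n) K)}
    (hD : D ∈ triSet K n) (i : Fin n) :
    ∀ j ∈ {j' : Fin n | (j' : ℕ) < (i : ℕ)},
      D (X j) ∈ supported K {j' : Fin n | (j' : ℕ) < (i : ℕ)} := by
  intro j hj
  refine supported_upward _ {j' : Fin n | (j' : ℕ) < (j : ℕ)} _ ?_ (hD j)
  intro l hl
  have hl' : (l : ℕ) < (j : ℕ) := hl
  have hj' : (j : ℕ) < (i : ℕ) := hj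
  exact lt_trans hl' hj'

theorem triSet_lie {K : Type*} [Field K] {n : ℕ}
    {a b : Derivation K (MvPolynomial (Fin n) K) (MvPolynomial (Fin n) K)}
    (ha : a ∈ triSet K n) (hb : b ∈ triSet K n) : ⁅a, b⁆ ∈ triSet K n := by
  intro i
  rw [Derivation.commutator_apply]
  exact sub_mem
    (Derivation.mem_supported_of_forall_mem _ a (triSet_stable ha i) (hb i))
    (Derivation.mem_supported_of_forall_mem _ b (triSet_stable hb i) (ha i))

/-- The Lie algebra `u_n = K∂₁ ⊕ P₁∂₂ ⊕ ⋯ ⊕ P_{n-1}∂ₙ` of triangular polynomial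
derivations, as a Lie subalgebra of the Lie algebra of all `K`-derivations of the
polynomial algebra `P_n = K[x₁,…,xₙ]`. -/
def triangular (K : Type*) [Field K] (n : ℕ) :
    LieSubalgebra K (Derivation K (MvPolynomial (Fin n) K) (MvPolynomial (Fin n) K)) where
  carrier := triSet K n
  add_mem' := fun {a b} ha hb i => by
    rw [Derivation.add_apply]; exact add_mem (ha i) (hb i)
  zero_mem' := fun i => by
    rw [Derivation.zero_apply]; exact zero_mem _
  smul_mem' := fun c a ha i => by
    rw [Derivation.smul_apply]; exact Subalgebra.smul_mem _ (ha i) c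
  lie_mem' := fun {a b} ha hb => triSet_lie ha hb

theorem mem_triangular_iff {K : Type*} [Field K] {n : ℕ}
    (D : Derivation K (MvPolynomial (Fin n) K) (MvPolynomial (Fin n) K)) :
    D ∈ triangular K n ↔
      ∀ i : Fin n, D (X i) ∈ supported K {j : Fin n | (j : ℕ) < (i : ℕ)} := Iff.rfl


theorem pow_succ_apply {R A : Type*} [CommRing R] [CommRing A] [Algebra R A]
    (d : Derivation R A A) (m : ℕ) (p : A) :
    (d.toLinearMap ^ (m + 1)) p = (d.toLinearMap ^ m) (d p) := by
  rw [pow_succ, Module.End.mul_apply]; rfl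

theorem ln_mono {R A : Type*} [CommRing R] [CommRing A] [Algebra R A]
    (d : Derivation R A A) {p : A} {k m : ℕ} (hkm : k ≤ m)
    (h : (d.toLinearMap ^ k) p = 0) : (d.toLinearMap ^ m) p = 0 := by
  obtain ⟨c, rfl⟩ := Nat.exists_eq_add_of_le hkm
  rw [show k + c = c + k by omega, pow_add, Module.End.mul_apply, h, map_zero]

theorem ln_mul {R A : Type*} [CommRing R] [CommRing A] [Algebra R A]
    (d : Derivation R A A) :
    ∀ (N : ℕ) (p q : A) (k l : ℕ), k + l ≤ N →
      (d.toLinearMap ^ k) p = 0 → (d.toLinearMap ^ l) q = 0 →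
      (d.toLinearMap ^ (k + l)) (p * q) = 0 := by
  intro N
  induction N with
  | zero =>
    intro p q k l hkl hp hq
    have hk : k = 0 := by omega
    subst hk
    simp only [pow_zero, Module.End.one_apply] at hp
    rw [hp, zero_mul, map_zero]
  | succ N ih =>
    intro p q k l hkl hp hq
    match k, l with
    | 0, l =>
      simp only [pow_zero, Module.End.one_apply] at hp
      rw [hp, zero_mul, map_zero]
    | k, 0 =>
      simp only [pow_zero, Module.End.one_apply] at hq
      rw [hq, mul_zero, map_zero]
    | k + 1, l + 1 =>
      have e : (k + 1) + (l + 1) = (k + l + 1) + 1 := by omega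
      rw [e, pow_succ_apply, Derivation.leibniz, smul_eq_mul, smul_eq_mul, map_add]
      have h1 : (d.toLinearMap ^ (k + l + 1)) (p * d q) = 0 := by
        have := ih p (d q) (k + 1) l (by omega) hp (by rw [← pow_succ_apply]; exact hq)
        rwa [show (k + 1) + l = k + l + 1 by omega] at this
      have h2 : (d.toLinearMap ^ (k + l + 1)) (q * d p) = 0 := by
        have := ih q (d p) (l + 1) k (by omega) hq (by rw [← pow_succ_apply]; exact hp)
        rwa [show (l + 1) + k = k + l + 1 by omega] at this
      rw [h1, h2, add_zero]

theorem ln_supported {K : Type*} [Field K] {n : ℕ}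
    (d : Derivation K (MvPolynomial (Fin n) K) (MvPolynomial (Fin n) K))
    (m : ℕ) (hX : ∀ j : Fin n, (j : ℕ) < m → ∃ k, (d.toLinearMap ^ k) (X j) = 0)
    {p : MvPolynomial (Fin n) K} (hp : p ∈ supported K {j : Fin n | (j : ℕ) < m}) :
    ∃ k, (d.toLinearMap ^ k) p = 0 := by
  rw [supported_eq_adjoin_X] at hp
  induction hp using Algebra.adjoin_induction with
  | mem x hx =>
    obtain ⟨j, hj, rfl⟩ := hx
    exact hX j hj
  | algebraMap r =>
    exact ⟨1, by rw [pow_one]; exact d.map_algebraMap r⟩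
  | add x y hx hy ihx ihy =>
    obtain ⟨k1, h1⟩ := ihx
    obtain ⟨k2, h2⟩ := ihy
    exact ⟨max k1 k2, by
      rw [map_add, ln_mono d (le_max_left k1 k2) h1,
        ln_mono d (le_max_right k1 k2) h2, add_zero]⟩
  | mul x y hx hy ihx ihy =>
    obtain ⟨k1, h1⟩ := ihx
    obtain ⟨k2, h2⟩ := ihy
    exact ⟨k1 + k2, ln_mul d (k1 + k2) x y k1 k2 le_rfl h1 h2⟩

theorem tri_ln_X {K : Type*} [Field K] {n : ℕ}
    {d : Derivation K (MvPolynomial (Fin n) K) (MvPolynomial (Fin n) K)}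
    (hd : d ∈ triSet K n) :
    ∀ (m : ℕ) (j : Fin n), (j : ℕ) < m → ∃ k, (d.toLinearMap ^ k) (X j) = 0 := by
  intro m
  induction m with
  | zero => intro j hj; omega
  | succ m ih =>
    intro j hj
    have hdXj : d (X j) ∈ supported K {l : Fin n | (l : ℕ) < m} := by
      refine supported_mono ?_ (hd j)
      intro l hl
      have : (l : ℕ) < (j : ℕ) := hl
      exact lt_of_lt_of_le this (by omega)
    obtain ⟨k, hk⟩ := ln_supported d m ih hdXj
    exact ⟨k + 1, by rw [pow_succ_apply]; exact hk⟩

theorem tri_ln_all {K : Type*} [Field K] {n : ℕ}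
    {d : Derivation K (MvPolynomial (Fin n) K) (MvPolynomial (Fin n) K)}
    (hd : d ∈ triSet K n) (p : MvPolynomial (Fin n) K) :
    ∃ k, (d.toLinearMap ^ k) p = 0 := by
  refine ln_supported d n (tri_ln_X hd n) ?_
  have : {j : Fin n | (j : ℕ) < n} = Set.univ := by
    ext j; simp [j.isLt]
  rw [this, supported_univ]
  trivial

/-- For every `n ≥ 2`, all inner derivations of the Lie algebra `u_n` are
locally nilpotent: for all `u v ∈ u_n` there is an `m` with `(ad u)^m v = 0`. -/
theorem triangular_ad_locally_nilpotent
    (K : Type*) [Field K] [CharZero K] (n : ℕ) (hn : 2 ≤ n)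
    (u v : ↥(triangular K n)) :
    ∃ m : ℕ, ((LieAlgebra.ad K ↥(triangular K n) u) ^ m) v = 0 := by
  classical
  set U : Derivation K (MvPolynomial (Fin n) K) (MvPolynomial (Fin n) K) := u.1 with hU
  have hUtri : U ∈ triSet K n := u.2
  -- the sequence of iterated brackets, as derivations
  set w : ℕ → Derivation K (MvPolynomial (Fin n) K) (MvPolynomial (Fin n) K) :=
    fun m => (((LieAlgebra.ad K ↥(triangular K n) u ^ m) v : ↥(triangular K n)) :
      Derivation K (MvPolynomial (Fin n) K) (MvPolynomial (Fin n) K)) with hw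
  have hwtri : ∀ m, w m ∈ triSet K n := fun m =>
    ((LieAlgebra.ad K ↥(triangular K n) u ^ m) v).2
  have hwsucc : ∀ m, w (m + 1) = ⁅U, w m⁆ := by
    intro m
    have : (LieAlgebra.ad K ↥(triangular K n) u ^ (m + 1)) v
        = ⁅u, (LieAlgebra.ad K ↥(triangular K n) u ^ m) v⁆ := by
      rw [pow_succ', Module.End.mul_apply, LieAlgebra.ad_apply]
    simp only [hw, this, LieSubalgebra.coe_bracket, hU]
  -- main induction: killing the first i variables
  have key : ∀ i : ℕ, i ≤ n → ∃ M : ℕ, ∀ m, M ≤ m → ∀ j : Fin n, (j : ℕ) < i →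
      w m (X j) = 0 := by
    intro i
    induction i with
    | zero => exact fun _ => ⟨0, fun m _ j hj => by omega⟩
    | succ i ih =>
      intro hin
      obtain ⟨M, hM⟩ := ih (by omega)
      set fi : Fin n := ⟨i, by omega⟩ with hfi
      -- for m ≥ M, w m kills everything supported below i
      have hkill : ∀ m, M ≤ m → ∀ p ∈ supported K {j : Fin n | (j : ℕ) < i},
          w m p = 0 := fun m hm p hp =>
        Derivation.eq_zero_of_forall_eq_zero _ (w m) (fun j hj => hM m hm j hj) hp
      -- recurrence for the i-th variable
      have hrec : ∀ m, M ≤ m → w (m + 1) (X fi) = U (w m (X fi)) := by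
        intro m hm
        rw [hwsucc m, Derivation.commutator_apply]
        have h2 : w m (U (X fi)) = 0 := by
          refine hkill m hm _ ?_
          exact hUtri fi
        rw [h2, sub_zero]
      have hiter : ∀ t, w (M + t) (X fi) = (U.toLinearMap ^ t) (w M (X fi)) := by
        intro t
        induction t with
        | zero => simp
        | succ t iht =>
          rw [show M + (t + 1) = (M + t) + 1 by omega, hrec (M + t) (by omega),
            iht, pow_succ', Module.End.mul_apply]
          rfl
      obtain ⟨k, hk⟩ := tri_ln_all hUtri (w M (X fi))
      refine ⟨M + k, fun m hm j hj => ?_⟩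
      rcases Nat.lt_or_ge (j : ℕ) i with h | h
      · exact hM m (by omega) j h
      · have hji : j = fi := Fin.ext (show (j : ℕ) = i by omega)
        subst hji
        obtain ⟨t, rfl⟩ := Nat.exists_eq_add_of_le (show M ≤ m by omega)
        rw [hiter t]
        exact ln_mono U (by omega) hk
  obtain ⟨M, hM⟩ := key n le_rfl
  refine ⟨M, ?_⟩
  have hval : w M = 0 := by
    ext p : 1
    rw [Derivation.zero_apply]
    refine Derivation.eq_zero_of_forall_eq_zero {j : Fin n | (j : ℕ) < n} (w M)
      (fun j hj => hM M le_rfl j hj) ?_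
    have : {j : Fin n | (j : ℕ) < n} = Set.univ := by ext j; simp [j.isLt]
    rw [this, supported_univ]
    trivial
  exact Subtype.ext hval
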